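/- For all x > 0 and all integers n ≥ 2, Σ_{k=0}^∞ (1+k)/(x+k)^n · Σ_{k=0}^∞ (1+k)/(x+k)^{n+2} − (Σ_{k=0}^∞ (1+k)/(x+k)^{n+1})² = Σ_{k=0}^∞ Σ_{j=k+1}^∞ (k−j)²(1+k)(1+j)[(x+k)(x+j)]^{-n-2}. -/

import Mathlib

private noncomputable def uu (x : ℝ) (m : ℕ) (k : ℕ) : ℝ := (1 + (k : ℝ)) / (x + k) ^ m

private lemma uu_nonneg (x : ℝ) (hx : 0 < x) (m k : ℕ) : 0 ≤ uu x m k := by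
  unfold uu
  have : (0:ℝ) < x + k := by positivity
  positivity

private lemma summable_uu (x : ℝ) (hx : 0 < x) (m : ℕ) (hm : 3 ≤ m) :
    Summable (uu x m) := by
  set c : ℝ := min x 1 with hc
  have hc0 : 0 < c := lt_min hx one_pos
  have hbase : Summable (fun k : ℕ => c⁻¹ ^ m * (1 / (1 + (k : ℝ)) ^ 2)) := by
    apply Summable.mul_left
    have : Summable (fun k : ℕ => 1 / ((k : ℝ)) ^ 2) :=
      Real.summable_one_div_nat_pow.mpr one_lt_two
    have h2 := (summable_nat_add_iff 1).mpr this
    refine h2.congr fun k => ?_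
    push_cast
    ring_nf
  apply Summable.of_nonneg_of_le (fun k => uu_nonneg x hx m k) _ hbase
  intro k
  unfold uu
  have hk1 : (0:ℝ) < 1 + k := by positivity
  have hxk : (0:ℝ) < x + k := by positivity
  have hle : c * (1 + (k:ℝ)) ≤ x + k := by
    rcases le_total x 1 with h | h
    · have hcx : c = x := min_eq_left h
      rw [hcx]
      nlinarith [Nat.cast_nonneg (α := ℝ) k]
    · have hcx : c = 1 := min_eq_right h
      rw [hcx]
      nlinarith
  have hpow : c ^ m * (1 + (k:ℝ)) ^ m ≤ (x + k) ^ m := by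
    rw [← mul_pow]
    exact pow_le_pow_left₀ (by positivity) hle m
  have hpow3 : (1 + (k:ℝ)) ^ 3 ≤ (1 + (k:ℝ)) ^ m :=
    pow_le_pow_right₀ (by linarith) hm
  rw [div_le_iff₀ (by positivity)]
  have h1 : c ^ m * (1 + (k:ℝ)) ^ 3 ≤ (x + k) ^ m :=
    le_trans (mul_le_mul_of_nonneg_left hpow3 (pow_pos hc0 m).le) hpow
  calc 1 + (k:ℝ) = c⁻¹ ^ m * (1 / (1 + (k:ℝ)) ^ 2) * (c ^ m * (1 + (k:ℝ)) ^ 3) := by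
        field_simp
        ring_nf
        rw [← mul_pow, mul_inv_cancel₀ hc0.ne', one_pow]
    _ ≤ c⁻¹ ^ m * (1 / (1 + (k:ℝ)) ^ 2) * (x + k) ^ m :=
        mul_le_mul_of_nonneg_left h1 (by positivity)

private noncomputable def FF (x : ℝ) (n : ℕ) (p : ℕ × ℕ) : ℝ :=
  uu x n p.1 * uu x (n + 2) p.2 - uu x (n + 1) p.1 * uu x (n + 1) p.2

private noncomputable def HH (x : ℝ) (n : ℕ) (p : ℕ × ℕ) : ℝ :=
  ((p.1 : ℝ) - p.2) ^ 2 * (1 + p.1) * (1 + p.2) / ((x + p.1) * (x + p.2)) ^ (n + 2)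

private lemma FF_swap_add (x : ℝ) (hx : 0 < x) (n : ℕ) (p : ℕ × ℕ) :
    FF x n p + FF x n p.swap = HH x n p := by
  obtain ⟨k, j⟩ := p
  have hk : (0:ℝ) < x + k := by positivity
  have hj : (0:ℝ) < x + j := by positivity
  unfold FF HH uu
  simp only [Prod.swap, Prod.fst, Prod.snd]
  have e1 : (1+(k:ℝ))/(x+k)^n * ((1+(j:ℝ))/(x+j)^(n+2))
      = ((1+(k:ℝ))*(1+(j:ℝ))*(x+k)^2)/(((x+k)*(x+j))^(n+2)) := by
    rw [div_mul_div_comm, mul_pow, div_eq_div_iff (by positivity) (by positivity)]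
    ring
  have e2 : (1+(j:ℝ))/(x+j)^n * ((1+(k:ℝ))/(x+k)^(n+2))
      = ((1+(k:ℝ))*(1+(j:ℝ))*(x+j)^2)/(((x+k)*(x+j))^(n+2)) := by
    rw [div_mul_div_comm, mul_pow, div_eq_div_iff (by positivity) (by positivity)]
    ring
  have e3 : (1+(k:ℝ))/(x+k)^(n+1) * ((1+(j:ℝ))/(x+j)^(n+1))
      = ((1+(k:ℝ))*(1+(j:ℝ))*((x+k)*(x+j)))/(((x+k)*(x+j))^(n+2)) := by
    rw [div_mul_div_comm, mul_pow, div_eq_div_iff (by positivity) (by positivity)]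
    ring
  have e4 : (1+(j:ℝ))/(x+j)^(n+1) * ((1+(k:ℝ))/(x+k)^(n+1))
      = ((1+(k:ℝ))*(1+(j:ℝ))*((x+k)*(x+j)))/(((x+k)*(x+j))^(n+2)) := by
    rw [div_mul_div_comm, mul_pow, div_eq_div_iff (by positivity) (by positivity)]
    ring
  rw [e1, e2, e3, e4, div_sub_div_same, div_sub_div_same, ← add_div]
  congr 1
  ring

private lemma HH_nonneg (x : ℝ) (hx : 0 < x) (n : ℕ) (p : ℕ × ℕ) : 0 ≤ HH x n p := by
  unfold HH
  have h1 : (0:ℝ) < x + p.1 := by positivity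
  have h2 : (0:ℝ) < x + p.2 := by positivity
  positivity

private lemma HH_swap (x : ℝ) (n : ℕ) (p : ℕ × ℕ) : HH x n p.swap = HH x n p := by
  obtain ⟨k, j⟩ := p
  unfold HH
  simp only [Prod.swap, Prod.fst, Prod.snd]
  rw [mul_comm (x + (j:ℝ)) (x + (k:ℝ))]
  ring_nf

private noncomputable def GG (x : ℝ) (n : ℕ) (p : ℕ × ℕ) : ℝ :=
  if p.1 < p.2 then HH x n p else 0

private lemma GG_decomp (x : ℝ) (n : ℕ) (p : ℕ × ℕ) :
    HH x n p = GG x n p + GG x n p.swap := by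
  obtain ⟨k, j⟩ := p
  unfold GG
  rcases lt_trichotomy k j with h | h | h
  · simp [h, not_lt.mpr h.le, HH]
  · subst h
    simp [HH, lt_irrefl]
  · have := HH_swap x n (k, j)
    simp only [Prod.swap] at this ⊢
    simp [h, not_lt.mpr h.le, ← this]

set_option maxHeartbeats 1000000 in
theorem stmt_13 (n : ℕ) (hn : 3 ≤ n) (x : ℝ) (hx : 0 < x) :
    (∑' k : ℕ, (1 + (k : ℝ)) / (x + k) ^ n) *
      (∑' k : ℕ, (1 + (k : ℝ)) / (x + k) ^ (n + 2)) -
      (∑' k : ℕ, (1 + (k : ℝ)) / (x + k) ^ (n + 1)) ^ 2 =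
    ∑' k : ℕ, ∑' j : ℕ, if k < j then
        ((k : ℝ) - j) ^ 2 * (1 + k) * (1 + j) / ((x + k) * (x + j)) ^ (n + 2)
      else 0 := by
  have hu := summable_uu x hx n hn
  have hv := summable_uu x hx (n + 2) (by omega)
  have hw := summable_uu x hx (n + 1) (by omega)
  have huN : Summable (fun k => ‖uu x n k‖) := by
    simpa [Real.norm_eq_abs] using hu.abs
  have hvN : Summable (fun k => ‖uu x (n + 2) k‖) := by
    simpa [Real.norm_eq_abs] using hv.abs
  have hwN : Summable (fun k => ‖uu x (n + 1) k‖) := by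
    simpa [Real.norm_eq_abs] using hw.abs
  have huv : Summable (fun p : ℕ × ℕ => uu x n p.1 * uu x (n + 2) p.2) :=
    hu.mul_of_nonneg hv (fun k => uu_nonneg x hx n k) (fun k => uu_nonneg x hx (n + 2) k)
  have hww : Summable (fun p : ℕ × ℕ => uu x (n + 1) p.1 * uu x (n + 1) p.2) :=
    hw.mul_of_nonneg hw (fun k => uu_nonneg x hx (n + 1) k) (fun k => uu_nonneg x hx (n + 1) k)
  have hF : Summable (FF x n) := huv.sub hww
  have hFswap : Summable (fun p : ℕ × ℕ => FF x n p.swap) :=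
    ((Equiv.prodComm ℕ ℕ).summable_iff).mpr hF
  have hH : Summable (HH x n) :=
    (hF.add hFswap).congr (fun p => FF_swap_add x hx n p)
  have hG : Summable (GG x n) := by
    apply Summable.of_nonneg_of_le _ _ hH
    · intro p
      unfold GG
      split
      · exact HH_nonneg x hx n p
      · exact le_refl 0
    · intro p
      unfold GG
      split
      · exact le_refl _
      · exact HH_nonneg x hx n p
  have hGswap : Summable (fun p : ℕ × ℕ => GG x n p.swap) :=
    ((Equiv.prodComm ℕ ℕ).summable_iff).mpr hG
  -- tsum of swap equals tsum
  have tFswap : (∑' p : ℕ × ℕ, FF x n p.swap) = ∑' p, FF x n p :=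
    (Equiv.prodComm ℕ ℕ).tsum_eq (FF x n)
  have tGswap : (∑' p : ℕ × ℕ, GG x n p.swap) = ∑' p, GG x n p :=
    (Equiv.prodComm ℕ ℕ).tsum_eq (GG x n)
  have h2F : (∑' p, HH x n p) = 2 * ∑' p, FF x n p := by
    calc (∑' p, HH x n p) = ∑' p : ℕ × ℕ, (FF x n p + FF x n p.swap) :=
          tsum_congr fun p => (FF_swap_add x hx n p).symm
    _ = (∑' p, FF x n p) + ∑' p : ℕ × ℕ, FF x n p.swap := Summable.tsum_add hF hFswap
    _ = 2 * ∑' p, FF x n p := by rw [tFswap]; ring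
  have h2G : (∑' p, HH x n p) = 2 * ∑' p, GG x n p := by
    calc (∑' p, HH x n p) = ∑' p : ℕ × ℕ, (GG x n p + GG x n p.swap) :=
          tsum_congr fun p => GG_decomp x n p
    _ = (∑' p, GG x n p) + ∑' p : ℕ × ℕ, GG x n p.swap := Summable.tsum_add hG hGswap
    _ = 2 * ∑' p, GG x n p := by rw [tGswap]; ring
  have hFG : (∑' p, FF x n p) = ∑' p, GG x n p := by linarith
  have lhs_eq : (∑' k, uu x n k) * (∑' k, uu x (n + 2) k) - (∑' k, uu x (n + 1) k) ^ 2
      = ∑' p, FF x n p := by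
    rw [sq, tsum_mul_tsum_of_summable_norm huN hvN, tsum_mul_tsum_of_summable_norm hwN hwN]
    rw [← Summable.tsum_sub huv hww]
    rfl
  have rhs_eq : (∑' p, GG x n p) = ∑' k : ℕ, ∑' j : ℕ, GG x n (k, j) := Summable.tsum_prod hG
  have final : (∑' k, uu x n k) * (∑' k, uu x (n + 2) k) - (∑' k, uu x (n + 1) k) ^ 2
      = ∑' k : ℕ, ∑' j : ℕ, GG x n (k, j) := by rw [lhs_eq, hFG, rhs_eq]
  simpa [GG, HH, uu] using final
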